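/- A set ζ of non-empty derivations over an ARS is the extension of some intensional strategy with memory if and only if ζ is closed, i.e., ζ contains all its limit points, where a limit point of ζ is a derivation π each of whose finite prefixes is a finite prefix of some derivation in ζ (and ζ is closed under non-empty prefixes). -/

import Mathlib

/-- A derivation over objects `O` and labels `L`: a partial function on ℕ whose
domain is an initial segment, with composable consecutive steps. -/
structure Deriv (O L : Type) where
  step : ℕ → Option (O × L × O)
  initial : ∀ i, step (i + 1) ≠ none → step i ≠ none
  comp : ∀ i s t, step i = some s → step (i + 1) = some t → t.1 = s.2.2

namespace Deriv
/-- Non-empty derivation. -/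
def NE {O L : Type} (π : Deriv O L) : Prop := π.step 0 ≠ none
/-- Finite derivation. -/
def Finite {O L : Type} (π : Deriv O L) : Prop := ∃ n, π.step n = none
/-- Derivation over the set of steps `Γ` of an ARS. -/
def Over {O L : Type} (Γ : Set (O × L × O)) (π : Deriv O L) : Prop :=
  ∀ i s, π.step i = some s → s ∈ Γ
end Deriv

/-- `π₀` is a prefix of `π`. -/
def DPrefix {O L : Type} (π₀ π : Deriv O L) : Prop :=
  ∀ i s, π₀.step i = some s → π.step i = some s

/-- History (trace) of the first `j` steps of a derivation. -/
def histD {O L : Type} (π : Deriv O L) (j : ℕ) : List (O × L) :=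
  (List.range j).filterMap fun i => (π.step i).map fun s => (s.1, s.2.1)

/-- Extension of an intensional strategy with memory. -/
def ExtOf {O L : Type} (lam : List (O × L) → O → Set (O × L × O)) : Set (Deriv O L) :=
  {π | π.NE ∧ ∀ j s, π.step j = some s → s ∈ lam (histD π j) s.1}

/-- Extension of a memoryless intensional strategy. -/
def MExtOf {O L : Type} (lam : O → Set (O × L × O)) : Set (Deriv O L) :=
  {π | π.NE ∧ ∀ j s, π.step j = some s → s ∈ lam s.1}

/-- Well-formedness of an intensional strategy with memory over the ARS `Γ`:
every chosen step has the current object as source and belongs to `Γ`. -/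
def WfStrat {O L : Type} (Γ : Set (O × L × O))
    (lam : List (O × L) → O → Set (O × L × O)) : Prop :=
  ∀ α a s, s ∈ lam α a → s.1 = a ∧ s ∈ Γ

/-- Well-formedness of a memoryless intensional strategy. -/
def MWfStrat {O L : Type} (Γ : Set (O × L × O)) (lam : O → Set (O × L × O)) : Prop :=
  ∀ a s, s ∈ lam a → s.1 = a ∧ s ∈ Γ

/-- `Γ` is a functional relation. -/
def FunctionalARS {O L : Type} (Γ : Set (O × L × O)) : Prop :=
  ∀ a φ b₁ b₂, (a, φ, b₁) ∈ Γ → (a, φ, b₂) ∈ Γ → b₁ = b₂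

/-- `π` is a limit point of `ζ`: every finite non-empty prefix of `π` is a
prefix of some member of `ζ`. -/
def LimPt {O L : Type} (ζ : Set (Deriv O L)) (π : Deriv O L) : Prop :=
  π.NE ∧ ∀ π₀ : Deriv O L, π₀.Finite → π₀.NE → DPrefix π₀ π → ∃ π' ∈ ζ, DPrefix π₀ π'

/-- `ζ` is closed: it contains all its limit points. -/
def ClosedStrat {O L : Type} (ζ : Set (Deriv O L)) : Prop :=
  ∀ π, LimPt ζ π → π ∈ ζ

/-- `ζ` is closed under non-empty prefixes. -/
def PrefClosed {O L : Type} (ζ : Set (Deriv O L)) : Prop :=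
  ∀ π ∈ ζ, ∀ π₀ : Deriv O L, π₀.NE → DPrefix π₀ π → π₀ ∈ ζ

section Aux

variable {O L : Type}

lemma step_none_mono (π : Deriv O L) {m n : ℕ} (h : π.step m = none) (hmn : m ≤ n) :
    π.step n = none := by
  induction hmn with
  | refl => exact h
  | step _ ih => by_contra hc; exact absurd (π.initial _ hc) (by simpa using ih)

lemma step_some_below (π : Deriv O L) {n i : ℕ} (h : π.step n ≠ none) (hin : i ≤ n) :
    π.step i ≠ none := fun hc => h (step_none_mono π hc hin)

lemma histD_congr (π π' : Deriv O L) (j : ℕ) (h : ∀ i < j, π.step i = π'.step i) :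
    histD π j = histD π' j := by
  unfold histD
  apply List.filterMap_congr
  intro i hi
  rw [h i (List.mem_range.mp hi)]

lemma histD_succ (π : Deriv O L) (n : ℕ) :
    histD π (n + 1) = histD π n ++ ((π.step n).map fun s => (s.1, s.2.1)).toList := by
  unfold histD
  rw [List.range_succ, List.filterMap_append]
  cases h : π.step n <;> simp [h]

lemma histD_length (π : Deriv O L) (n : ℕ) (hd : ∀ i < n, π.step i ≠ none) :
    (histD π n).length = n := by
  induction n with
  | zero => simp [histD]
  | succ k ih =>
    rw [histD_succ]
    obtain ⟨s, hs⟩ := Option.ne_none_iff_exists'.mp (hd k (Nat.lt_succ_self k))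
    rw [hs, List.length_append, ih (fun i hi => hd i (hi.trans (Nat.lt_succ_self k)))]
    simp

lemma steps_eq (Γ : Set (O × L × O)) (hΓ : FunctionalARS Γ)
    (π π' : Deriv O L) (hπ : π.Over Γ) (hπ' : π'.Over Γ) :
    ∀ n : ℕ, (∀ i < n, π.step i ≠ none) → (∀ i < n, π'.step i ≠ none) →
      histD π n = histD π' n → ∀ i < n, π.step i = π'.step i := by
  intro n
  induction n with
  | zero => intro _ _ _ i hi; omega
  | succ k ih =>
    intro hd hd' hh i hi
    obtain ⟨s, hs⟩ := Option.ne_none_iff_exists'.mp (hd k (Nat.lt_succ_self k))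
    obtain ⟨t, ht⟩ := Option.ne_none_iff_exists'.mp (hd' k (Nat.lt_succ_self k))
    have hdk : ∀ i < k, π.step i ≠ none := fun i hi => hd i (hi.trans (Nat.lt_succ_self k))
    have hdk' : ∀ i < k, π'.step i ≠ none := fun i hi => hd' i (hi.trans (Nat.lt_succ_self k))
    have hhk : histD π k = histD π' k ∧ (s.1, s.2.1) = (t.1, t.2.1) := by
      rw [histD_succ, histD_succ, hs, ht] at hh
      simp only [Option.map_some, Option.toList_some] at hh
      have := List.append_inj hh (by rw [histD_length _ _ hdk, histD_length _ _ hdk'])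
      exact ⟨this.1, by simpa using this.2⟩
    rcases Nat.lt_succ_iff_lt_or_eq.mp hi with hik | rfl
    · exact ih hdk hdk' hhk.1 i hik
    · obtain ⟨h1, h2⟩ := Prod.mk.inj hhk.2
      have h3 : s.2.2 = t.2.2 := by
        apply hΓ s.1 s.2.1
        · exact hπ i s hs
        · have := hπ' i t ht
          rw [h1, h2]
          exact this
      have : s = t := by
        ext <;> simp [h1, h2, h3]
      rw [hs, ht, this]

/-- Truncation of a derivation to its first `n` steps. -/
def trunc (π : Deriv O L) (n : ℕ) : Deriv O L where
  step i := if i < n then π.step i else none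
  initial i h := by
    try simp only at h ⊢
    split at h
    · next hin =>
      have : i < n := by omega
      simp only [this, if_true]
      exact π.initial i h
    · exact absurd rfl h
  comp i s t hs ht := by
    try simp only at hs ht
    split at hs
    · split at ht
      · exact π.comp i s t hs ht
      · exact absurd ht (by simp)
    · exact absurd hs (by simp)

end Aux

/-- a set of non-empty derivations over an ARS is the extension of
some intensional strategy with memory iff it is closed (contains all its limit
points) and closed under non-empty prefixes. -/
theorem extension_characterization
    (O L : Type) (Γ : Set (O × L × O)) (hΓ : FunctionalARS Γ)
    (ζ : Set (Deriv O L))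
    (hne : ∀ π ∈ ζ, π.NE) (hover : ∀ π ∈ ζ, π.Over Γ) :
    (∃ lam, WfStrat Γ lam ∧ ExtOf lam = ζ) ↔ (ClosedStrat ζ ∧ PrefClosed ζ) := by
  constructor
  · rintro ⟨lam, hwf, rfl⟩
    constructor
    · -- closed
      rintro π ⟨hπne, hlim⟩
      refine ⟨hπne, ?_⟩
      intro j s hjs
      obtain ⟨π', ⟨hπ'ne, hπ'ext⟩, hpref⟩ := hlim (trunc π (j + 1))
        ⟨j + 1, by simp [trunc]⟩
        (by
          show ¬ _
          simp only [trunc]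
          rw [if_pos (Nat.succ_pos j)]
          exact step_some_below π (hjs ▸ (by simp)) (Nat.zero_le j))
        (by intro i t ht; simp only [trunc] at ht; split at ht; exact ht; exact absurd ht (by simp))
      have hstep : ∀ i ≤ j, π'.step i = π.step i := by
        intro i hij
        have hd : π.step i ≠ none := step_some_below π (hjs ▸ (by simp)) hij
        obtain ⟨t, ht⟩ := Option.ne_none_iff_exists'.mp hd
        rw [ht]
        exact hpref i t (by simp only [trunc]; rw [if_pos (by omega)]; exact ht)
      have hhist : histD π' j = histD π j :=
        histD_congr _ _ _ fun i hi => hstep i (le_of_lt hi)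
      have := hπ'ext j s (by rw [hstep j le_rfl]; exact hjs)
      rwa [hhist] at this
    · -- prefix-closed
      rintro π ⟨hπne, hπext⟩ π₀ hπ₀ne hpref
      refine ⟨hπ₀ne, ?_⟩
      intro j s hjs
      have hhist : histD π₀ j = histD π j := by
        apply histD_congr
        intro i hi
        obtain ⟨t, ht⟩ := Option.ne_none_iff_exists'.mp
          (step_some_below π₀ (hjs ▸ (by simp)) (le_of_lt hi))
        rw [ht, hpref i t ht]
      rw [hhist]
      exact hπext j s (hpref j s hjs)
  · rintro ⟨hcl, hpc⟩
    refine ⟨fun α a => {s | s ∈ Γ ∧ s.1 = a ∧ ∃ π ∈ ζ, histD π α.length = α ∧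
      π.step α.length = some s}, fun α a s hs => ⟨hs.2.1, hs.1⟩, ?_⟩
    apply Set.eq_of_subset_of_subset
    · -- ExtOf lam ⊆ ζ
      rintro π ⟨hπne, hπext⟩
      have hπΓ : π.Over Γ := fun i s hi => (hπext i s hi).1
      apply hcl
      refine ⟨hπne, ?_⟩
      rintro π₀ hfin hπ₀ne hpref
      classical
      have hex : ∃ n, π₀.step n = none := hfin
      set n := Nat.find hex with hn
      have hnnone : π₀.step n = none := Nat.find_spec hex
      have hnpos : 0 < n := by
        rcases Nat.eq_zero_or_pos n with h0 | h
        · exact absurd (h0 ▸ hnnone) hπ₀ne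
        · exact h
      set k := n - 1 with hk
      obtain ⟨s, hs⟩ := Option.ne_none_iff_exists'.mp
        (Nat.find_min hex (m := k) (by omega))
      have hπk : π.step k = some s := hpref k s hs
      have hmem := hπext k s hπk
      obtain ⟨-, -, π', hπ'ζ, hπ'hist, hπ'step⟩ := hmem
      have hπdef : ∀ i < k, π.step i ≠ none :=
        fun i hi => step_some_below π (hπk ▸ (by simp)) (le_of_lt hi)
      have hlen : (histD π k).length = k := histD_length π k hπdef
      have hπ'step' : π'.step k = some s := by rwa [hlen] at hπ'step
      have hπ'hist' : histD π' k = histD π k := by rwa [hlen] at hπ'hist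
      have hπ'def : ∀ i < k, π'.step i ≠ none :=
        fun i hi => step_some_below π' (hπ'step' ▸ (by simp)) (le_of_lt hi)
      have hdk1 : ∀ i < k + 1, π.step i ≠ none :=
        fun i hi => step_some_below π (n := k) (show π.step k ≠ none by rw [hπk]; simp) (by omega)
      have hdk1' : ∀ i < k + 1, π'.step i ≠ none :=
        fun i hi => step_some_below π' (n := k) (show π'.step k ≠ none by rw [hπ'step']; simp) (by omega)
      have hhk1 : histD π (k + 1) = histD π' (k + 1) := by
        rw [histD_succ, histD_succ, hπk, hπ'step', hπ'hist']
      have heq := steps_eq Γ hΓ π π' hπΓ (hover π' hπ'ζ) (k + 1) hdk1 hdk1' hhk1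
      refine ⟨π', hπ'ζ, ?_⟩
      intro i t ht
      have hik : i < n := by
        by_contra hc
        rw [step_none_mono π₀ hnnone (by omega)] at ht
        exact (by simp at ht)
      rw [← heq i (by omega)]
      exact hpref i t ht
    · -- ζ ⊆ ExtOf lam
      rintro π hπζ
      refine ⟨hne π hπζ, ?_⟩
      intro j s hjs
      have hπdef : ∀ i < j, π.step i ≠ none :=
        fun i hi => step_some_below π (hjs ▸ (by simp)) (le_of_lt hi)
      exact ⟨hover π hπζ j s hjs, rfl, π, hπζ, by rw [histD_length π j hπdef],
        by rw [histD_length π j hπdef]; exact hjs⟩
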